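/- arXiv:0706.2112 — 3 statements merged into one kernel-verified Lean document; each statement's English description precedes it below -/
import Mathlib

section
/- Let F_q be a finite field, m ≥ 2, a ∈ F_q, b ∈ F_q*. Then m · P_m(a,b) = Σ_{t | m} μ(t) · N_{m/t}(a,b), where μ is the Möbius function. -/
open Polynomial IntermediateField
set_option linter.unusedSectionVars false

section Aux

variable {F E : Type*} [Field F] [Fintype F] [Field E] [Fintype E] [Algebra F E]

private lemma aux_pow_mul (x : E) (q d k : ℕ) (h : x ^ q ^ d = x) :
    x ^ q ^ (d * k) = x := by
  induction k with
  | zero => simp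
  | succ k ih => rw [mul_add, mul_one, pow_add, pow_mul, ih, h]

private lemma aux_pow_gcd (x : E) (q : ℕ) (a b : ℕ) (ha : x ^ q ^ a = x)
    (hb : x ^ q ^ b = x) : x ^ q ^ (Nat.gcd a b) = x := by
  induction a, b using Nat.gcd.induction with
  | H0 n => simpa using hb
  | H1 a b hpos ih =>
    rw [Nat.gcd_rec]
    apply ih _ ha
    calc x ^ q ^ (b % a) = (x ^ q ^ (a * (b / a))) ^ q ^ (b % a) := by
          rw [aux_pow_mul x q a (b / a) ha]
      _ = x ^ (q ^ (a * (b / a)) * q ^ (b % a)) := (pow_mul x _ _).symm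
      _ = x ^ q ^ (a * (b / a) + b % a) := by rw [pow_add]
      _ = x := by rw [Nat.div_add_mod]; exact hb

private lemma pow_card_pow_deg (F : Type*) {E : Type*} [Field F] [Fintype F] [Field E]
    [Fintype E] [Algebra F E] (x : E) :
    x ^ Fintype.card F ^ (minpoly F x).natDegree = x := by
  have hx : IsIntegral F x := IsIntegral.of_finite F x
  letI : Fintype F⟮x⟯ := Fintype.ofFinite _
  have hcard : Fintype.card F⟮x⟯ = Fintype.card F ^ (minpoly F x).natDegree := by
    rw [Module.card_eq_pow_finrank (K := F) (V := F⟮x⟯), IntermediateField.adjoin.finrank hx]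
  have h2 : (IntermediateField.AdjoinSimple.gen F x) ^
      (Fintype.card F ^ (minpoly F x).natDegree) = IntermediateField.AdjoinSimple.gen F x := by
    rw [← hcard]; exact FiniteField.pow_card _
  have := congrArg (Subtype.val) h2
  simpa using this

private lemma deg_le_of_pow (F : Type*) {E : Type*} [Field F] [Fintype F] [Field E]
    [Fintype E] [Algebra F E] (x : E) {g : ℕ} (hg : g ≠ 0)
    (h : x ^ Fintype.card F ^ g = x) : (minpoly F x).natDegree ≤ g := by
  classical
  obtain ⟨p, hp⟩ := CharP.exists F
  haveI hpF : CharP F p := hp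
  obtain ⟨n, hprime, hcardF⟩ := FiniteField.card F p
  haveI : Fact p.Prime := ⟨hprime⟩
  haveI : CharP E p := charP_of_injective_algebraMap (algebraMap F E).injective p
  let K : IntermediateField F E :=
    { carrier := {y : E | y ^ Fintype.card F ^ g = y}
      mul_mem' := fun {u v} hu hv => by
        simp only [Set.mem_setOf_eq] at *
        rw [mul_pow, hu, hv]
      one_mem' := by simp
      add_mem' := fun {u v} hu hv => by
        simp only [Set.mem_setOf_eq] at *
        rw [hcardF, ← pow_mul, add_pow_char_pow, pow_mul, ← hcardF, hu, hv]
      zero_mem' := by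
        simp only [Set.mem_setOf_eq]
        exact zero_pow (pow_ne_zero _ Fintype.card_ne_zero)
      algebraMap_mem' := fun c => by
        simp only [Set.mem_setOf_eq, ← map_pow, FiniteField.pow_card_pow]
      inv_mem' := fun u hu => by
        simp only [Set.mem_setOf_eq] at *
        rw [inv_pow, hu] }
  have hxK : x ∈ K := h
  have hle : F⟮x⟯ ≤ K := by
    rw [IntermediateField.adjoin_le_iff]
    exact Set.singleton_subset_iff.mpr hxK
  letI : Fintype K := Fintype.ofFinite _
  letI : Fintype F⟮x⟯ := Fintype.ofFinite _
  have h1 : Fintype.card F⟮x⟯ = Fintype.card F ^ (minpoly F x).natDegree := by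
    rw [Module.card_eq_pow_finrank (K := F) (V := F⟮x⟯),
      IntermediateField.adjoin.finrank (IsIntegral.of_finite F x)]
  have h2 : Fintype.card F⟮x⟯ ≤ Fintype.card K :=
    Fintype.card_le_of_injective (fun y => ⟨y.1, hle y.2⟩)
      (fun y z hyz => Subtype.ext (Subtype.mk_eq_mk.mp hyz))
  have h3 : Fintype.card K ≤ Fintype.card F ^ g := by
    set Q : E[X] := X ^ (Fintype.card F ^ g) - X with hQdef
    have hQ : Q ≠ 0 := FiniteField.X_pow_card_pow_sub_X_ne_zero E hg Fintype.one_lt_card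
    have hdeg : Q.natDegree = Fintype.card F ^ g :=
      FiniteField.X_pow_card_pow_sub_X_natDegree_eq E hg Fintype.one_lt_card
    have hinj : Function.Injective (fun y : K => (⟨y.1, by
        rw [Multiset.mem_toFinset, mem_roots hQ]
        have hy : (y : E) ^ Fintype.card F ^ g = y := y.2
        simp [hQdef, IsRoot, hy]⟩ : {z : E // z ∈ Q.roots.toFinset})) :=
      fun y z hyz => Subtype.ext (Subtype.mk_eq_mk.mp hyz)
    calc Fintype.card K ≤ Fintype.card {z : E // z ∈ Q.roots.toFinset} :=
          Fintype.card_le_of_injective _ hinj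
      _ = Q.roots.toFinset.card := Fintype.card_coe _
      _ ≤ Multiset.card Q.roots := Q.roots.toFinset_card_le
      _ ≤ Q.natDegree := Q.card_roots'
      _ = Fintype.card F ^ g := hdeg
  have := (h1 ▸ h2).trans h3
  exact (Nat.pow_le_pow_iff_right Fintype.one_lt_card).mp this

private lemma pow_card_pow_eq_iff (F : Type*) {E : Type*} [Field F] [Fintype F] [Field E]
    [Fintype E] [Algebra F E] (x : E) {s : ℕ} (hs : s ≠ 0) :
    x ^ Fintype.card F ^ s = x ↔ (minpoly F x).natDegree ∣ s := by
  have hint : IsIntegral F x := IsIntegral.of_finite F x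
  have hdpos : 0 < (minpoly F x).natDegree := minpoly.natDegree_pos hint
  constructor
  · intro h
    have hd := pow_card_pow_deg F x
    set d := (minpoly F x).natDegree with hddef
    have hg : x ^ Fintype.card F ^ Nat.gcd d s = x := aux_pow_gcd x _ d s hd h
    have hg0 : Nat.gcd d s ≠ 0 := Nat.gcd_ne_zero_right hs
    have hle : d ≤ Nat.gcd d s := deg_le_of_pow F x hg0 hg
    have hgd : Nat.gcd d s ≤ d := Nat.le_of_dvd hdpos (Nat.gcd_dvd_left d s)
    have : Nat.gcd d s = d := le_antisymm hgd hle
    rw [← this]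
    exact Nat.gcd_dvd_right d s
  · rintro ⟨k, rfl⟩
    exact aux_pow_mul _ _ _ _ (pow_card_pow_deg F x)

private lemma trace_norm_of_gen (F : Type*) {E : Type*} [Field F] [Fintype F] [Field E]
    [Fintype E] [Algebra F E] {m : ℕ} (hrank : Module.finrank F E = m) (x : E)
    (hx : (minpoly F x).natDegree = m) :
    Algebra.trace F E x = -(minpoly F x).coeff (m - 1) ∧
      Algebra.norm F x = (-1) ^ m * (minpoly F x).coeff 0 := by
  have hint : IsIntegral F x := IsIntegral.of_finite F x
  have hmpos : 0 < m := hx ▸ minpoly.natDegree_pos hint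
  have htop : F⟮x⟯ = ⊤ :=
    (Field.primitive_element_iff_minpoly_natDegree_eq F x).mpr (by rw [hx, hrank])
  let e : F⟮x⟯ ≃ₐ[F] E := (IntermediateField.equivOfEq htop).trans IntermediateField.topEquiv
  let pb := (IntermediateField.adjoin.powerBasis hint).map e
  have hgen : pb.gen = x := rfl
  have hdim : pb.dim = m := by
    show (IntermediateField.adjoin.powerBasis hint).dim = m
    rw [IntermediateField.adjoin.powerBasis_dim, hx]
  constructor
  · have := pb.trace_gen_eq_nextCoeff_minpoly
    rw [hgen] at this
    rw [this, nextCoeff_of_natDegree_pos (hx ▸ hmpos), hx]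
  · have := Algebra.PowerBasis.norm_gen_eq_coeff_zero_minpoly pb
    rw [hgen, hdim] at this
    exact this

private lemma splits_in_E (F : Type*) {E : Type*} [Field F] [Fintype F] [Field E]
    [Fintype E] [Algebra F E] {m : ℕ} (hrank : Module.finrank F E = m)
    {f : F[X]} (hmonic : f.Monic) (hirr : Irreducible f) (hdeg : f.natDegree = m) :
    Splits (f.map (algebraMap F E)) := by
  classical
  have hne : f ≠ 0 := hmonic.ne_zero
  have hm0 : 0 < m := hdeg ▸ hirr.natDegree_pos
  letI : Fact (Irreducible f) := ⟨hirr⟩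
  let K := AdjoinRoot f
  let pb := AdjoinRoot.powerBasis hne
  haveI : Module.Finite F K := pb.finite
  letI : Fintype K := Fintype.ofEquiv _ pb.basis.equivFun.toEquiv.symm
  have hcardK : Fintype.card K = Fintype.card F ^ m := by
    rw [Module.card_eq_pow_finrank (K := F) (V := K), pb.finrank, AdjoinRoot.powerBasis_dim, hdeg]
  have hroot : (AdjoinRoot.root f) ^ Fintype.card F ^ m = AdjoinRoot.root f := by
    rw [← hcardK]; exact FiniteField.pow_card _
  have hmin : minpoly F (AdjoinRoot.root f) = f := by
    rw [AdjoinRoot.minpoly_root hne, hmonic.leadingCoeff, inv_one, map_one, mul_one]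
  have hdvd : f ∣ (X ^ Fintype.card F ^ m - X : F[X]) := by
    rw [← hmin]
    apply minpoly.dvd
    rw [map_sub, aeval_X_pow, aeval_X, hroot, sub_self]
  have hsplit : Splits ((X ^ Fintype.card F ^ m - X : F[X]).map (algebraMap F E)) := by
    have hcardE : Fintype.card E = Fintype.card F ^ m := by
      rw [Module.card_eq_pow_finrank (K := F) (V := E), hrank]
    have := (FiniteField.isSplittingField_sub E F).splits
    rwa [hcardE] at this
  exact Splits.of_dvd hsplit (Polynomial.map_ne_zero (FiniteField.X_pow_card_pow_sub_X_ne_zero F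
    hm0.ne' Fintype.one_lt_card)) (Polynomial.map_dvd _ hdvd)

end Aux

private lemma root_props (F : Type*) {E : Type*} [Field F] [Fintype F] [Field E] [Fintype E]
    [Algebra F E] {m : ℕ} (hrank : Module.finrank F E = m) {a b : F} (hb : b ≠ 0)
    {f : F[X]} (hmonic : f.Monic) (hirr : Irreducible f) (hdeg : f.natDegree = m)
    (hc1 : f.coeff (m - 1) = -a) (hc0 : f.coeff 0 = (-1) ^ m * b)
    {x : E} (hroot : aeval x f = 0) :
    minpoly F x = f ∧ x ≠ 0 ∧ (minpoly F x).natDegree = m ∧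
      Algebra.trace F E x = a ∧ Algebra.norm F x = b := by
  have hmin : minpoly F x = f := (minpoly.eq_of_irreducible_of_monic hirr hroot hmonic).symm
  have hdx : (minpoly F x).natDegree = m := by rw [hmin, hdeg]
  obtain ⟨htr, hnm⟩ := trace_norm_of_gen F hrank x hdx
  have hc0' : f.coeff 0 ≠ 0 := by
    rw [hc0]
    exact mul_ne_zero (pow_ne_zero _ (neg_ne_zero.mpr one_ne_zero)) hb
  have hx0 : x ≠ 0 := by
    rintro rfl
    have h1 : aeval (0 : E) f = algebraMap F E (f.coeff 0) := by
      rw [aeval_def, eval₂_at_zero]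
    rw [h1] at hroot
    exact hc0' ((algebraMap F E).injective (by simpa using hroot))
  refine ⟨hmin, hx0, hdx, ?_, ?_⟩
  · rw [htr, hmin, hc1, neg_neg]
  · rw [hnm, hmin, hc0, ← mul_assoc, ← mul_pow, neg_mul_neg, one_mul, one_pow, one_mul]

private lemma card_rootsE (F : Type*) {E : Type*} [Field F] [Fintype F] [Field E] [Fintype E]
    [Algebra F E] {m : ℕ} (hrank : Module.finrank F E = m)
    {f : F[X]} (hmonic : f.Monic) (hirr : Irreducible f) (hdeg : f.natDegree = m) :
    Nat.card {x : E // aeval x f = 0} = m := by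
  classical
  have hsep : f.Separable := PerfectField.separable_of_irreducible hirr
  have hsplit := splits_in_E F hrank hmonic hirr hdeg
  have hne : f ≠ 0 := hmonic.ne_zero
  have h1 : Fintype.card (f.rootSet E) = m := by
    rw [card_rootSet_eq_natDegree hsep hsplit, hdeg]
  rw [Nat.card_eq_fintype_card, ← h1]
  exact Fintype.card_congr (Equiv.subtypeEquivRight (fun x => by simp [mem_rootSet, hne]))

/-- Let `F = F_q` be a finite field, `E = F_{q^m}` an extension of degree
`m ≥ 2`, `a ∈ F`, `b ∈ Fˣ`.  Writing `P m a b` for the number of monic irreducible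
polynomials of degree `m` over `F` with coefficient of `x^(m-1)` equal to `-a` and constant
coefficient `(-1)^m * b`, and `N t a b` for the number of nonzero `x ∈ F_{q^t} ⊆ E`
(characterized by `x^(q^t) = x`) with trace `a` and norm `b` from `E` to `F`, we have
`m * P m a b = ∑_{t ∣ m} μ(t) * N (m/t) a b`. -/
theorem stmt0 (F E : Type*) [Field F] [Fintype F] [Field E] [Fintype E] [Algebra F E]
    (m : ℕ) (hm : 2 ≤ m) (hrank : Module.finrank F E = m) (a b : F) (hb : b ≠ 0)
    (P : ℕ) (hP : P = Nat.card {f : F[X] // f.Monic ∧ Irreducible f ∧ f.natDegree = m ∧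
      f.coeff (m - 1) = -a ∧ f.coeff 0 = (-1) ^ m * b})
    (N : ℕ → ℕ) (hN : ∀ t, N t = Nat.card {x : E // x ≠ 0 ∧ x ^ (Fintype.card F) ^ t = x ∧
      Algebra.trace F E x = a ∧ Algebra.norm F (x : E) = b}) :
    (m : ℤ) * P = ∑ t ∈ m.divisors, ArithmeticFunction.moebius t * (N (m / t) : ℤ) := by
  classical
  have hm0 : m ≠ 0 := by omega
  set q := Fintype.card F with hq
  set Mp : ℕ → E → Prop := fun d x => x ≠ 0 ∧ (minpoly F x).natDegree = d ∧
      Algebra.trace F E x = a ∧ Algebra.norm F x = b with hMp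
  set M : ℕ → ℕ := fun d => Nat.card {x : E // Mp d x} with hM
  -- Step 1 : `N s = ∑ d ∈ s.divisors, M d` for `s ≠ 0`
  have step1 : ∀ s : ℕ, s ≠ 0 → N s = ∑ d ∈ s.divisors, M d := by
    intro s hs
    rw [hN s, Nat.card_eq_fintype_card, Fintype.card_subtype]
    have H : ∀ x ∈ Finset.univ.filter (fun x : E => x ≠ 0 ∧ x ^ q ^ s = x ∧
        Algebra.trace F E x = a ∧ Algebra.norm F (x : E) = b),
        (minpoly F x).natDegree ∈ s.divisors := by
      intro x hx
      rw [Finset.mem_filter] at hx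
      exact Nat.mem_divisors.mpr ⟨(pow_card_pow_eq_iff F x hs).mp hx.2.2.1, hs⟩
    rw [Finset.card_eq_sum_card_fiberwise H]
    apply Finset.sum_congr rfl
    intro d hd
    have hds : d ∣ s := (Nat.mem_divisors.mp hd).1
    show _ = Nat.card {x : E // Mp d x}
    rw [Nat.card_eq_fintype_card, Fintype.card_subtype, Finset.filter_filter]
    congr 1
    apply Finset.filter_congr
    intro x _
    simp only [hMp]
    constructor
    · rintro ⟨⟨h0, _, htr, hnm⟩, hdeg⟩
      exact ⟨h0, hdeg, htr, hnm⟩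
    · rintro ⟨h0, hdeg, htr, hnm⟩
      exact ⟨⟨h0, (pow_card_pow_eq_iff F x hs).mpr (hdeg ▸ hds), htr, hnm⟩, hdeg⟩
  -- Step 2 : `M m = P * m`
  have step2 : M m = P * m := by
    have hfilterM : M m = (Finset.univ.filter (fun x : E => Mp m x)).card := by
      show Nat.card {x : E // Mp m x} = _
      rw [Nat.card_eq_fintype_card, Fintype.card_subtype]
    set s0 := Finset.univ.filter (fun x : E => Mp m x) with hs0
    set TF := s0.image (fun x => minpoly F x) with hTF
    have hprops : ∀ f ∈ TF, f.Monic ∧ Irreducible f ∧ f.natDegree = m ∧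
        f.coeff (m - 1) = -a ∧ f.coeff 0 = (-1) ^ m * b := by
      intro f hf
      rw [hTF, Finset.mem_image] at hf
      obtain ⟨x, hx, rfl⟩ := hf
      rw [hs0, Finset.mem_filter] at hx
      obtain ⟨-, h0, hdeg, htr, hnm⟩ := hx
      have hint : IsIntegral F x := IsIntegral.of_finite F x
      obtain ⟨htr', hnm'⟩ := trace_norm_of_gen F hrank x hdeg
      refine ⟨minpoly.monic hint, minpoly.irreducible hint, hdeg, ?_, ?_⟩
      · rw [htr'] at htr
        rw [← htr, neg_neg]
      · rw [hnm'] at hnm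
        calc (minpoly F x).coeff 0
            = (-1 : F) ^ m * ((-1) ^ m * (minpoly F x).coeff 0) := by
              rw [← mul_assoc, ← mul_pow, neg_mul_neg, one_mul, one_pow, one_mul]
          _ = (-1) ^ m * b := by rw [hnm]
    have hfiber : ∀ f ∈ TF, (s0.filter (fun x => minpoly F x = f)).card = m := by
      intro f hf
      obtain ⟨hmonic, hirr, hdeg, hc1, hc0⟩ := hprops f hf
      have hset : s0.filter (fun x => minpoly F x = f)
          = Finset.univ.filter (fun x : E => aeval x f = 0) := by
        ext x
        simp only [hs0, Finset.mem_filter, Finset.mem_univ, true_and, and_assoc]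
        constructor
        · rintro ⟨⟨h0, hdx, htr, hnm⟩, rfl⟩
          exact minpoly.aeval F x
        · intro hroot
          obtain ⟨hmin, h0, hdx, htr, hnm⟩ :=
            root_props F hrank hb hmonic hirr hdeg hc1 hc0 hroot
          exact ⟨⟨h0, hdx, htr, hnm⟩, hmin⟩
      rw [hset, ← Fintype.card_subtype, ← Nat.card_eq_fintype_card]
      exact card_rootsE F hrank hmonic hirr hdeg
    have hcount : s0.card = TF.card * m := by
      rw [Finset.card_eq_sum_card_fiberwise
        (fun x hx => Finset.mem_image_of_mem (fun y => minpoly F y) hx),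
        Finset.sum_congr rfl hfiber, Finset.sum_const, smul_eq_mul]
    have hPT : P = TF.card := by
      have hfin : Finite {f : F[X] // f.Monic ∧ Irreducible f ∧ f.natDegree = m ∧
          f.coeff (m - 1) = -a ∧ f.coeff 0 = (-1) ^ m * b} := by
        refine Finite.of_injective (β := Fin (m + 1) → F)
          (fun f => fun i => f.1.coeff i) ?_
        intro f g hfg
        apply Subtype.ext
        apply Polynomial.ext
        intro n
        by_cases hn : n < m + 1
        · exact congrFun hfg ⟨n, hn⟩
        · rw [coeff_eq_zero_of_natDegree_lt (by rw [f.2.2.2.1]; omega),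
            coeff_eq_zero_of_natDegree_lt (by rw [g.2.2.2.1]; omega)]
      haveI := hfin
      letI := Fintype.ofFinite {f : F[X] // f.Monic ∧ Irreducible f ∧ f.natDegree = m ∧
          f.coeff (m - 1) = -a ∧ f.coeff 0 = (-1) ^ m * b}
      rw [hP, ← Fintype.card_coe TF, Nat.card_eq_fintype_card]
      apply Fintype.card_congr
      apply Equiv.subtypeEquivRight
      intro f
      constructor
      · rintro ⟨hmonic, hirr, hdeg, hc1, hc0⟩
        have hsplit := splits_in_E F hrank hmonic hirr hdeg
        obtain ⟨x, hx⟩ := Splits.exists_eval_eq_zero hsplit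
          (by rw [degree_map, degree_eq_natDegree hmonic.ne_zero, hdeg]; exact_mod_cast by omega)
        have hroot : aeval x f = 0 := by rwa [aeval_def, eval₂_eq_eval_map]
        obtain ⟨hmin, h0, hdx, htr, hnm⟩ :=
          root_props F hrank hb hmonic hirr hdeg hc1 hc0 hroot
        rw [hTF, Finset.mem_image]
        exact ⟨x, by rw [hs0, Finset.mem_filter]; exact ⟨Finset.mem_univ x, h0, hdx, htr, hnm⟩,
          hmin⟩
      · exact hprops f
    rw [hfilterM, hcount, hPT]
  -- Möbius inversion
  have hmoeb := (ArithmeticFunction.sum_eq_iff_sum_mul_moebius_eq (R := ℤ)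
      (f := fun d => (M d : ℤ)) (g := fun s => (N s : ℤ))).mp
      (fun n hn => by rw [step1 n hn.ne']; push_cast; ring) m (by omega)
  rw [← Nat.sum_divisorsAntidiagonal
    (fun t s => (ArithmeticFunction.moebius t : ℤ) * (N s : ℤ))]
  rw [show (∑ x ∈ m.divisorsAntidiagonal,
      (ArithmeticFunction.moebius x.1 : ℤ) * (N x.2 : ℤ)) = (M m : ℤ) from by
    rw [← hmoeb]; push_cast; ring_nf]
  rw [step2]
  push_cast
  ring
end

section
/- Let F_q be a finite field, n a divisor of q−1, t ≥ 1, α ∈ F_{q^t}*, and let e be the canonical additive character of F_{q^t}. Then Σ_{x ∈ F_{q^t}*} e(α·x^n) = Σ_{λ ∈ H_n} G(λ^{-1} ∘ N_t) · λ(N_t(α)), where H_n is the subgroup of order n of the multiplicative character group of F_q, N_t is the norm from F_{q^t} to F_q, and G(ψ) = Σ_{x ∈ F_{q^t}*} e(x)·ψ(x) is the Gauss sum. -/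
/-- The canonical additive character of a finite field `F` of characteristic `p`:
`x ↦ exp(2πi · Tr_{F/F_p}(x) / p)`. -/
noncomputable def canonChar (p : ℕ) (F : Type*) [Field F] [Fintype F] [CharP F p] (x : F) : ℂ :=
  letI := ZMod.algebra F p
  Complex.exp (2 * Real.pi * Complex.I * ((Algebra.trace (ZMod p) F x).val / p))


open Finset in
private lemma aux_pow_inj {G : Type*} [Group G] {g : G} {n : ℕ} (hg : orderOf g = n) :
    ∀ i ∈ Finset.range n, ∀ j ∈ Finset.range n, g ^ i = g ^ j → i = j := by
  intro i hi j hj hij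
  rw [Finset.mem_range] at hi hj
  have h := pow_eq_pow_iff_modEq.mp hij
  rwa [hg, Nat.ModEq, Nat.mod_eq_of_lt hi, Nat.mod_eq_of_lt hj] at h

private lemma aux_card_image {G : Type*} [Group G] [DecidableEq G] {g : G} {n : ℕ}
    (hg : orderOf g = n) : ((Finset.range n).image (g ^ ·)).card = n := by
  rw [Finset.card_image_of_injOn, Finset.card_range]
  intro i hi j hj hij
  exact aux_pow_inj hg i (by simpa using hi) j (by simpa using hj) hij

private lemma aux_filter_eq {G : Type*} [Group G] [Fintype G] [DecidableEq G] [IsCyclic G] {g : G}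
    {n : ℕ} (hn0 : 0 < n) (hg : orderOf g = n) :
    Finset.univ.filter (fun x : G => x ^ n = 1) = (Finset.range n).image (g ^ ·) := by
  refine (Finset.eq_of_subset_of_card_le ?_ ?_).symm
  · intro x hx
    obtain ⟨j, _, rfl⟩ := Finset.mem_image.mp hx
    refine Finset.mem_filter.mpr ⟨Finset.mem_univ _, ?_⟩
    rw [← pow_mul, mul_comm, pow_mul, ← hg, pow_orderOf_eq_one, one_pow]
  · rw [aux_card_image hg]
    exact IsCyclic.card_pow_eq_one_le hn0

open Finset in
private theorem aux_normform (p : ℕ) (F E : Type*) [Field F] [Fintype F] [Field E] [Fintype E]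
    [Algebra F E] [CharP F p] [CharP E p] (t : ℕ) (ht : 1 ≤ t)
    (hrank : Module.finrank F E = t) :
    ∀ x : E, algebraMap F E (Algebra.norm F x) = x ^ (∑ i ∈ Finset.range t, Fintype.card F ^ i) := by
  classical
  set q := Fintype.card F with hq_def
  have hq : 1 < q := Fintype.one_lt_card
  haveI : Fact p.Prime := ⟨CharP.char_is_prime F p⟩
  haveI : ExpChar E p := ExpChar.prime Fact.out
  obtain ⟨s, ⟨-, hs⟩⟩ := FiniteField.card F p
  have hcardE : Fintype.card E = q ^ t := by rw [← hrank]; exact Module.card_eq_pow_finrank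
  have hcomm : ∀ a : F, iterateFrobenius E p s (algebraMap F E a) = algebraMap F E a := by
    intro a
    rw [iterateFrobenius_def, ← map_pow, ← hs, FiniteField.pow_card]
  let φh : E →ₐ[F] E := { toRingHom := iterateFrobenius E p s, commutes' := hcomm }
  have hbij : Function.Bijective φh :=
    (Finite.injective_iff_bijective).mp (φh.toRingHom.injective)
  let φ : E ≃ₐ[F] E := AlgEquiv.ofBijective φh hbij
  have hφ : ∀ x : E, φ x = x ^ q := by
    intro x
    show iterateFrobenius E p s x = x ^ q
    rw [iterateFrobenius_def, ← hs, hq_def]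
  have hφi : ∀ (i : ℕ) (x : E), (φ ^ i) x = x ^ q ^ i := by
    intro i
    induction i with
    | zero => intro x; simp
    | succ k ih =>
      intro x
      rw [pow_succ, AlgEquiv.mul_apply, hφ x, ih, ← pow_mul, ← pow_succ']
  obtain ⟨g, hg⟩ := IsCyclic.exists_generator (α := Eˣ)
  have horder_g : orderOf g = q ^ t - 1 := by
    rw [orderOf_eq_card_of_forall_mem_zpowers hg, Nat.card_eq_fintype_card,
      Fintype.card_units, hcardE]
  have horderφ : orderOf φ = t := by
    rw [orderOf_eq_iff ht]
    constructor
    · ext x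
      rw [hφi, AlgEquiv.one_apply, ← hcardE, FiniteField.pow_card]
    · intro m hm hm0 hφm
      have h1 : ((g : E) ^ (q ^ m) : E) = (g : E) := by
        conv_rhs => rw [← AlgEquiv.one_apply (R := F) (g : E)]
        rw [← hφm, hφi]
      have h2 : g ^ (q ^ m) = g ^ 1 := by
        ext; rw [Units.val_pow_eq_pow_val]; simpa using h1
      have h3 := pow_eq_pow_iff_modEq.mp h2
      rw [horder_g, Nat.ModEq] at h3
      have hqm1 : 1 < q ^ m := Nat.one_lt_pow hm0.ne' hq
      have h5 : q ^ m * 2 ≤ q ^ t := by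
        calc q ^ m * 2 ≤ q ^ m * q := Nat.mul_le_mul_left _ hq
          _ = q ^ (m + 1) := (pow_succ q m).symm
          _ ≤ q ^ t := Nat.pow_le_pow_right (by omega) (by omega)
      have hlt1 : q ^ m < q ^ t - 1 := by omega
      have hlt2 : (1 : ℕ) < q ^ t - 1 := by omega
      rw [Nat.mod_eq_of_lt hlt1, Nat.mod_eq_of_lt hlt2] at h3
      omega
  have hGalcard : Fintype.card (E ≃ₐ[F] E) = t := by
    rw [← Nat.card_eq_fintype_card, IsGalois.card_aut_eq_finrank, hrank]
  have huniv : (Finset.univ : Finset (E ≃ₐ[F] E)) = (Finset.range t).image (φ ^ ·) := by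
    symm
    apply Finset.eq_univ_of_card
    rw [aux_card_image horderφ, hGalcard]
  intro x
  rw [Algebra.norm_eq_prod_automorphisms, huniv, Finset.prod_image (aux_pow_inj horderφ)]
  calc ∏ i ∈ Finset.range t, (φ ^ i) x = ∏ i ∈ Finset.range t, x ^ q ^ i :=
        Finset.prod_congr rfl fun i _ => hφi i x
    _ = x ^ ∑ i ∈ Finset.range t, q ^ i := Finset.prod_pow_eq_pow_sum _ _ _

/-- Let `F = F_q` be a finite field, `n ∣ q - 1`, `E = F_{q^t}` an extension
of degree `t ≥ 1`, `α ∈ Eˣ`, and `e` the canonical additive character of `E`.  Then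
`∑_{x ∈ Eˣ} e(α x^n) = ∑_{λ ∈ H_n} G(λ⁻¹ ∘ N_t) · λ(N_t α)`, where `H_n` is the subgroup of
order `n` of the multiplicative character group of `F`, i.e. `{λ | λ^n = 1}`, `N_t` is the
norm from `E` to `F` and `G(λ⁻¹ ∘ N_t) = ∑_{x ∈ Eˣ} e(x) · λ⁻¹(N_t x)` is a Gauss sum. -/
theorem stmt2 (p : ℕ) (F E : Type*) [Field F] [Fintype F] [Field E] [Fintype E] [Algebra F E]
    [CharP F p] [CharP E p] [DecidableEq E] (n t : ℕ) (hn : n ∣ Fintype.card F - 1) (ht : 1 ≤ t)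
    (hrank : Module.finrank F E = t) (α : E) (hα : α ≠ 0) :
    ∑ x : Eˣ, canonChar p E (α * (x : E) ^ n) =
      ∑ l ∈ (Set.toFinite {l : MulChar F ℂ | l ^ n = 1}).toFinset,
        (∑ x : Eˣ, canonChar p E (x : E) * l⁻¹ (Algebra.norm F (x : E))) *
          l (Algebra.norm F α) := by
  classical
  set q := Fintype.card F with hq_def
  have hq : 1 < q := Fintype.one_lt_card
  have hn0 : 0 < n := by
    rcases Nat.eq_zero_or_pos n with h | h
    · subst h; rw [zero_dvd_iff] at hn; omega
    · exact h
  set c := ∑ i ∈ Finset.range t, q ^ i with hc_def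
  have hcpos : 0 < c :=
    Finset.sum_pos (fun i _ => pow_pos (by omega) i) ⟨0, Finset.mem_range.mpr ht⟩
  have hcardE : Fintype.card E = q ^ t := by rw [← hrank]; exact Module.card_eq_pow_finrank
  have hc : q ^ t - 1 = c * (q - 1) := by
    have h1 := geom_sum_mul (q : ℤ) t
    have h3 : ((q ^ t - 1 : ℕ) : ℤ) = ((c * (q - 1) : ℕ) : ℤ) := by
      rw [Nat.cast_sub (Nat.one_le_pow _ _ (by omega)), Nat.cast_mul, Nat.cast_sub hq.le]
      push_cast
      rw [← h1, hc_def]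
      push_cast
      ring
    exact_mod_cast h3
  have hcardEx : Fintype.card Eˣ = q ^ t - 1 := by rw [Fintype.card_units, hcardE]
  have hEx0 : q ^ t - 1 ≠ 0 := by
    have h := Fintype.card_pos (α := Eˣ); rw [hcardEx] at h; omega
  have hndvdE : n ∣ q ^ t - 1 := hn.trans ⟨c, by rw [hc, mul_comm]⟩
  -- the norm formula
  have NF : ∀ x : E, algebraMap F E (Algebra.norm F x) = x ^ c := by
    rw [hc_def, hq_def]; exact aux_normform p F E t ht hrank
  obtain ⟨g, hg⟩ := IsCyclic.exists_generator (α := Eˣ)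
  have horder_g : orderOf g = q ^ t - 1 := by
    rw [orderOf_eq_card_of_forall_mem_zpowers hg, Nat.card_eq_fintype_card, hcardEx]
  -- the norm as a map of unit groups
  set ν : Eˣ →* Fˣ := Units.map (Algebra.norm F : E →* F) with hν_def
  have hνcoe : ∀ x : Eˣ, Algebra.norm F (x : E) = ((ν x : Fˣ) : F) :=
    fun x => (Units.coe_map _ _).symm
  have hkey : ∀ k : ℕ, (ν g) ^ k = 1 ↔ (q - 1) ∣ k := by
    intro k
    rw [← map_pow]
    calc ν (g ^ k) = 1 ↔ ((ν (g ^ k) : Fˣ) : F) = 1 := by rw [Units.ext_iff, Units.val_one]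
      _ ↔ algebraMap F E (Algebra.norm F ((g ^ k : Eˣ) : E)) = algebraMap F E 1 := by
            rw [← hνcoe]; exact ((algebraMap F E).injective.eq_iff).symm
      _ ↔ (g : E) ^ (k * c) = 1 := by
            rw [NF, map_one, Units.val_pow_eq_pow_val, ← pow_mul]
      _ ↔ orderOf ((g : E)) ∣ k * c := orderOf_dvd_iff_pow_eq_one.symm
      _ ↔ (q - 1) * c ∣ k * c := by rw [orderOf_units, horder_g, hc, mul_comm c (q - 1)]
      _ ↔ (q - 1) ∣ k := Nat.mul_dvd_mul_iff_right hcpos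
  have horder_νg : orderOf (ν g) = q - 1 :=
    Nat.dvd_antisymm (orderOf_dvd_of_pow_eq_one ((hkey _).mpr dvd_rfl))
      ((hkey _).mp (pow_orderOf_eq_one _))
  have hgenF : ∀ y : Fˣ, y ∈ Subgroup.zpowers (ν g) := by
    have htop : Subgroup.zpowers (ν g) = ⊤ := by
      apply Subgroup.eq_top_of_card_eq
      rw [Nat.card_zpowers, horder_νg, Nat.card_eq_fintype_card, Fintype.card_units]
    intro y; rw [htop]; exact Subgroup.mem_top y
  -- a multiplicative character of order n on F
  obtain ⟨χ, hχ⟩ := MulChar.exists_mulChar_orderOf F hn (Complex.isPrimitiveRoot_exp n hn0.ne')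
  have hχn : χ ^ n = 1 := hχ ▸ pow_orderOf_eq_one χ
  -- the composite character values
  set u : Eˣ → ℂ := fun z => χ (Algebra.norm F (z : E)) with hu_def
  have hu_mul : ∀ z w : Eˣ, u (z * w) = u z * u w := by
    intro z w
    simp only [hu_def, Units.val_mul, map_mul]
  have hu_pow : ∀ (z : Eˣ) (k : ℕ), u (z ^ k) = (u z) ^ k := by
    intro z k
    simp only [hu_def, Units.val_pow_eq_pow_val, map_pow]
  have hu_one : u 1 = 1 := by simp only [hu_def, Units.val_one, map_one]
  have hu_inv : ∀ z : Eˣ, u z⁻¹ = (u z)⁻¹ := by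
    intro z
    refine eq_inv_of_mul_eq_one_left ?_
    rw [← hu_mul, inv_mul_cancel, hu_one]
  have hpow_apply : ∀ (j : ℕ) (z : Eˣ), (χ ^ j) (Algebra.norm F (z : E)) = (u z) ^ j := by
    intro j z
    rw [hνcoe z, MulChar.pow_apply_coe, hu_def]
    simp only [hνcoe z]
  have hu_n : ∀ z : Eˣ, (u z) ^ n = 1 := by
    intro z
    rw [← hpow_apply n z, hχn, hνcoe z, MulChar.one_apply_coe]
  have horder_ug : orderOf (u g) = n := by
    rw [← hχ]
    apply orderOf_eq_orderOf_iff.mpr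
    intro k
    have hug : (u g) ^ k = (χ ^ k) ((ν g : Fˣ) : F) := by
      rw [MulChar.pow_apply_coe, hu_def]
      simp only [hνcoe g]
    constructor
    · intro hk
      apply (MulChar.eq_iff hgenF (χ ^ k) 1).mpr
      rw [MulChar.one_apply_coe, ← hug, hk]
    · intro hk
      rw [hug, hk, MulChar.one_apply_coe]
  -- u z = 1 iff z is an n-th power
  have EQV : ∀ z : Eˣ, u z = 1 ↔ ∃ w : Eˣ, w ^ n = z := by
    intro z
    obtain ⟨k, hk⟩ := (Submonoid.mem_powers_iff z g).mp
      (((isOfFinOrder_of_finite g).mem_powers_iff_mem_zpowers).mpr (hg z))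
    rw [← hk, hu_pow]
    constructor
    · intro h
      have hd : n ∣ k := by rw [← horder_ug]; exact orderOf_dvd_of_pow_eq_one h
      obtain ⟨j, rfl⟩ := hd
      exact ⟨g ^ j, by rw [← pow_mul, mul_comm]⟩
    · rintro ⟨w, hw⟩
      obtain ⟨l, hl⟩ := (Submonoid.mem_powers_iff w g).mp
        (((isOfFinOrder_of_finite g).mem_powers_iff_mem_zpowers).mpr (hg w))
      rw [← hl, ← pow_mul] at hw
      have hmod := pow_eq_pow_iff_modEq.mp hw
      rw [horder_g] at hmod
      have hmod2 : l * n ≡ k [MOD n] := hmod.of_dvd hndvdE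
      have h0 : l * n ≡ 0 [MOD n] := (Nat.modEq_zero_iff_dvd).mpr ⟨l, mul_comm l n⟩
      have hdvd : n ∣ k := (Nat.modEq_zero_iff_dvd).mp (hmod2.symm.trans h0)
      rw [← horder_ug] at hdvd
      exact orderOf_dvd_iff_pow_eq_one.mp hdvd
  -- cardinality of the set of n-th roots of unity in Eˣ
  have CARD1 : (Finset.univ.filter fun x : Eˣ => x ^ n = 1).card = n := by
    have hdvd : (q ^ t - 1) / n ∣ q ^ t - 1 := Nat.div_dvd_of_dvd hndvdE
    have horder : orderOf (g ^ ((q ^ t - 1) / n)) = n := by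
      rw [orderOf_pow, horder_g, Nat.gcd_eq_right hdvd, Nat.div_div_self hndvdE hEx0]
    rw [aux_filter_eq hn0 horder, aux_card_image horder]
  -- the key counting identity
  have KEY : ∀ y : Eˣ, ((Finset.univ.filter fun x : Eˣ => x ^ n = y).card : ℂ)
      = ∑ j ∈ Finset.range n, (u y⁻¹) ^ j := by
    intro y
    by_cases hy : u y = 1
    · have h1 : u y⁻¹ = 1 := by rw [hu_inv, hy, inv_one]
      rw [h1]
      simp only [one_pow, Finset.sum_const, Finset.card_range, nsmul_eq_mul, mul_one]
      obtain ⟨w, hw⟩ := (EQV y).mp hy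
      have himg : (Finset.univ.filter fun x : Eˣ => x ^ n = y)
          = (Finset.univ.filter fun x : Eˣ => x ^ n = 1).image (w * ·) := by
        ext x
        simp only [Finset.mem_filter, Finset.mem_univ, true_and, Finset.mem_image]
        constructor
        · intro hx
          refine ⟨w⁻¹ * x, ?_, by group⟩
          rw [mul_pow, inv_pow, hw, hx, inv_mul_cancel]
        · rintro ⟨z, hz, rfl⟩
          rw [mul_pow, hz, hw, mul_one]
      rw [himg, Finset.card_image_of_injective _ (mul_right_injective w), CARD1]
    · have hempty : (Finset.univ.filter fun x : Eˣ => x ^ n = y) = ∅ :=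
        Finset.filter_eq_empty_iff.mpr fun x _ hx => hy ((EQV y).mpr ⟨x, hx⟩)
      have hζ1 : u y⁻¹ ≠ 1 := by
        intro h
        rw [hu_inv, inv_eq_one] at h
        exact hy h
      rw [hempty, geom_sum_eq hζ1 n, hu_n, sub_self, zero_div, Finset.card_empty, Nat.cast_zero]
  -- identify the character set
  haveI : Fintype (MulChar F ℂ) := Fintype.ofFinite _
  haveI : NeZero (Fintype.card Fˣ) := ⟨Fintype.card_pos.ne'⟩
  haveI : IsCyclic (MulChar F ℂ) :=
    isCyclic_of_surjective _ (MulChar.equiv_rootsOfUnity F ℂ).symm.surjective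
  have hHn : (Set.toFinite {l : MulChar F ℂ | l ^ n = 1}).toFinset
      = (Finset.range n).image (χ ^ ·) := by
    rw [← aux_filter_eq hn0 hχ]
    ext l
    simp [Set.Finite.mem_toFinset]
  -- put everything together
  set α' : Eˣ := Units.mk0 α hα with hα'_def
  have hα'c : (α' : E) = α := rfl
  have hL : ∑ x : Eˣ, canonChar p E (α * (x : E) ^ n)
      = ∑ y : Eˣ, ((Finset.univ.filter fun x : Eˣ => x ^ n = y).card : ℂ)
          * canonChar p E (α * (y : E)) := by
    rw [← Finset.sum_fiberwise Finset.univ (fun x : Eˣ => x ^ n)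
      (fun x : Eˣ => canonChar p E (α * (x : E) ^ n))]
    refine Finset.sum_congr rfl fun y _ => ?_
    have hcg : ∀ x ∈ Finset.univ.filter (fun x : Eˣ => x ^ n = y),
        canonChar p E (α * (x : E) ^ n) = canonChar p E (α * (y : E)) := by
      intro x hx
      have hxy := (Finset.mem_filter.mp hx).2
      rw [← hxy, Units.val_pow_eq_pow_val]
    rw [Finset.sum_congr rfl hcg, Finset.sum_const, nsmul_eq_mul]
  have hR1 : ∀ j ∈ Finset.range n,
      (∑ x : Eˣ, canonChar p E (x : E) * (χ ^ j)⁻¹ (Algebra.norm F ((x : Eˣ) : E)))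
          * (χ ^ j) (Algebra.norm F α)
      = ∑ x : Eˣ, canonChar p E (x : E) * (u (α' * x⁻¹)) ^ j := by
    intro j _
    rw [Finset.sum_mul]
    refine Finset.sum_congr rfl fun x _ => ?_
    rw [mul_assoc]
    congr 1
    have h2 : (χ ^ j) (Algebra.norm F α) = (u α') ^ j := hpow_apply j α'
    rw [MulChar.inv_apply_eq_inv', hpow_apply j x, h2, hu_mul, hu_inv, mul_pow, inv_pow]
    exact mul_comm _ _
  rw [hL, hHn, Finset.sum_image (aux_pow_inj hχ), Finset.sum_congr rfl hR1, Finset.sum_comm]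
  refine Fintype.sum_equiv (Equiv.mulLeft α') _ _ fun y => ?_
  show ((Finset.univ.filter fun x : Eˣ => x ^ n = y).card : ℂ) * canonChar p E (α * (y : E))
    = ∑ j ∈ Finset.range n, canonChar p E ((α' * y : Eˣ) : E) * (u (α' * (α' * y)⁻¹)) ^ j
  have h3 : α' * (α' * y)⁻¹ = y⁻¹ := by
    rw [mul_inv_rev, mul_comm y⁻¹ α'⁻¹, ← mul_assoc, mul_inv_cancel, one_mul]
  have h4 : ((α' * y : Eˣ) : E) = α * (y : E) := by rw [Units.val_mul, hα'c]
  rw [h3, h4, ← Finset.mul_sum, ← KEY y, mul_comm]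
end

section
/- Let F_q be a finite field of characteristic 2 and c ∈ F_q*. Then k_2(c) = k_1(c)² − q, where k_n(c) is the n-dimensional Kloosterman sum over F_q. -/
open Polynomial

/-- The `n`-dimensional (hyper-)Kloosterman sum over `F` at `c`, with respect to the
canonical additive character:
`k_n(c) = ∑_{x₁,…,xₙ ∈ Fˣ} χ(x₁ + ⋯ + xₙ + c/(x₁⋯xₙ))`. -/
noncomputable def kloos (p : ℕ) (F : Type*) [Field F] [Fintype F] [CharP F p]
    (n : ℕ) (c : F) : ℂ :=
  letI := Classical.decEq F
  ∑ x : Fin n → Fˣ, canonChar p F ((∑ i, (x i : F)) + c / ∏ i, (x i : F))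

namespace Stmt14Aux

/-- trace to the prime field, with the canonical algebra structure. -/
noncomputable def trZ (F : Type*) [Field F] [Fintype F] [CharP F 2] (x : F) : ZMod 2 :=
  letI := ZMod.algebra F 2
  Algebra.trace (ZMod 2) F x

lemma zmod2_sq : ∀ r : ZMod 2, r ^ 2 = r := by decide

variable {F : Type*} [Field F] [Fintype F] [CharP F 2]

lemma trZ_add (x y : F) : trZ F (x + y) = trZ F x + trZ F y := by
  unfold trZ; exact map_add _ x y

lemma trZ_zero : trZ F 0 = 0 := by unfold trZ; exact map_zero _

lemma trZ_sq (x : F) : trZ F (x ^ 2) = trZ F x := by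
  letI := ZMod.algebra F 2
  haveI : Fact (Nat.Prime 2) := ⟨by norm_num⟩
  let e : F ≃ₐ[ZMod 2] F :=
    AlgEquiv.ofBijective
      { toRingHom := frobenius F 2
        commutes' := fun r => by
          show (algebraMap (ZMod 2) F r) ^ 2 = algebraMap (ZMod 2) F r
          rw [← map_pow, zmod2_sq r] }
      ((Finite.injective_iff_bijective).mp (frobenius_inj F 2))
  exact Algebra.trace_eq_of_algEquiv e x

lemma trZ_exists : ∃ b : F, trZ F b ≠ 0 := by
  letI := ZMod.algebra F 2
  haveI : Fact (Nat.Prime 2) := ⟨by norm_num⟩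
  haveI : FiniteDimensional (ZMod 2) F := Module.Finite.of_finite
  have h := traceForm_nondegenerate (ZMod 2) F
  by_contra hf
  push_neg at hf
  have h1 : (1 : F) = 0 := h.1 1 (fun y => by
    simpa [Algebra.traceForm_apply, trZ] using hf y)
  exact one_ne_zero h1

lemma chi_eq (x : F) : canonChar 2 F x = (-1 : ℂ) ^ (trZ F x).val := by
  rw [show canonChar 2 F x
      = Complex.exp (2 * Real.pi * Complex.I * (((trZ F x).val : ℂ) / ((2:ℕ):ℂ))) from rfl]
  rw [show (2 * Real.pi * Complex.I * (((trZ F x).val : ℂ) / ((2:ℕ):ℂ)))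
      = ((trZ F x).val : ℂ) * (Real.pi * Complex.I) by push_cast; ring]
  rw [Complex.exp_nat_mul, Complex.exp_pi_mul_I]

lemma zmod2_val_add : ∀ u v : ZMod 2, ((-1 : ℂ)) ^ (u + v).val = (-1) ^ u.val * (-1) ^ v.val := by
  have h : ∀ u : ZMod 2, u = 0 ∨ u = 1 := by decide
  intro u v
  rcases h u with hu | hu <;> rcases h v with hv | hv <;> subst hu <;> subst hv <;>
    norm_num [ZMod.val_zero, ZMod.val_one, (by decide : ZMod.val (2 : ZMod 2) = 0),
      (by decide : ((1 : ZMod 2) + 1) = 0)]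

lemma chi_add (x y : F) : canonChar 2 F (x + y) = canonChar 2 F x * canonChar 2 F y := by
  rw [chi_eq, chi_eq, chi_eq, trZ_add, zmod2_val_add]

lemma chi_zero : canonChar 2 F 0 = 1 := by
  rw [chi_eq, trZ_zero]; norm_num [ZMod.val_zero]

lemma chi_sq (x : F) : canonChar 2 F x * canonChar 2 F x = 1 := by
  rw [← chi_add, CharTwo.add_self_eq_zero, chi_zero]

lemma chi_one_or_neg_one (x : F) : canonChar 2 F x = 1 ∨ canonChar 2 F x = -1 :=
  mul_self_eq_one_iff.mp (chi_sq x)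

lemma chi_exists_ne_one : ∃ b : F, canonChar 2 F b ≠ 1 := by
  obtain ⟨b, hb⟩ := trZ_exists (F := F)
  refine ⟨b, ?_⟩
  rw [chi_eq]
  have h1 : trZ F b = 1 := by
    have : ∀ u : ZMod 2, u ≠ 0 → u = 1 := by decide
    exact this _ hb
  rw [h1, ZMod.val_one]
  norm_num

lemma sum_chi : ∑ t : F, canonChar 2 F t = 0 := by
  obtain ⟨b, hb⟩ := chi_exists_ne_one (F := F)
  have h : ∑ t : F, canonChar 2 F t = ∑ t : F, canonChar 2 F (t + b) :=
    (Fintype.sum_bijective (fun t => t + b)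
      (AddGroup.addRight_bijective b) _ _ (fun t => rfl)).symm
  simp_rw [chi_add] at h
  rw [← Finset.sum_mul] at h
  have h2 : (∑ t : F, canonChar 2 F t) * (1 - canonChar 2 F b) = 0 := by
    rw [mul_sub, mul_one]
    rw [← h]
    ring
  rcases mul_eq_zero.mp h2 with h3 | h3
  · exact h3
  · exact absurd (by linear_combination -h3 : canonChar 2 F b = 1) hb


section Counting

open Finset

variable [DecidableEq F]

set_option linter.unusedSectionVars false

lemma add_eq_zero_iff' {a b : F} : a + b = 0 ↔ a = b := by
  rw [CharTwo.add_eq_iff_eq_add, zero_add]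

lemma phi_add (a b : F) : (a + b) ^ 2 + (a + b) = (a ^ 2 + a) + (b ^ 2 + b) := by
  rw [CharTwo.add_sq]; ring

lemma chi_phi (r : F) : canonChar 2 F (r ^ 2 + r) = 1 := by
  rw [chi_add, chi_eq, chi_eq, trZ_sq, ← chi_eq, chi_sq]

lemma phi_zero_iff {a : F} : a ^ 2 + a = 0 ↔ a = 0 ∨ a = 1 := by
  have h : a ^ 2 + a = a * (a + 1) := by ring
  rw [h, mul_eq_zero]
  constructor
  · rintro (h1 | h1)
    · exact Or.inl h1
    · exact Or.inr (add_eq_zero_iff'.mp h1)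
  · rintro (h1 | h1)
    · exact Or.inl h1
    · exact Or.inr (add_eq_zero_iff'.mpr h1)

lemma phi_eq_iff {r s : F} : s ^ 2 + s = r ^ 2 + r ↔ s = r ∨ s = r + 1 := by
  have key : (s + r) ^ 2 + (s + r) = 0 ↔ s ^ 2 + s = r ^ 2 + r := by
    rw [phi_add]; exact add_eq_zero_iff'
  rw [← key, phi_zero_iff]
  exact or_congr add_eq_zero_iff' (by rw [CharTwo.add_eq_iff_eq_add, add_comm])

lemma fiber_eq_pair {t r : F} (hr : r ^ 2 + r = t) :
    univ.filter (fun s : F => s ^ 2 + s = t) = {r, r + 1} := by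
  ext s
  simp only [mem_filter, mem_univ, true_and, mem_insert, mem_singleton, ← hr, phi_eq_iff]

lemma fiber_card_of_mem {t r : F} (hr : r ^ 2 + r = t) :
    (univ.filter (fun s : F => s ^ 2 + s = t)).card = 2 := by
  rw [fiber_eq_pair hr, card_pair]
  intro h
  exact one_ne_zero (add_eq_zero_iff'.mp (by linear_combination -h)).symm

lemma image_eq_ker :
    univ.image (fun r : F => r ^ 2 + r) = univ.filter (fun t => canonChar 2 F t = 1) := by
  apply eq_of_subset_of_card_le
  · intro t ht
    obtain ⟨r, _, hr⟩ := mem_image.mp ht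
    simp only [mem_filter, mem_univ, true_and]
    rw [← hr]; exact chi_phi r
  · -- card equality : both have card q / 2
    have hA : 2 * (univ.image (fun r : F => r ^ 2 + r)).card = Fintype.card F := by
      have h1 := Finset.card_eq_sum_card_image (fun r : F => r ^ 2 + r) univ
      rw [Finset.card_univ] at h1
      rw [h1, Finset.sum_congr rfl (fun t ht => by
        obtain ⟨r, _, hr⟩ := mem_image.mp ht
        exact fiber_card_of_mem hr), Finset.sum_const, smul_eq_mul, mul_comm]
    have hB : 2 * (univ.filter (fun t : F => canonChar 2 F t = 1)).card = Fintype.card F := by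
      obtain ⟨b, hb⟩ := chi_exists_ne_one (F := F)
      have hcard : (univ.filter (fun t : F => canonChar 2 F t = 1)).card
          = (univ.filter (fun t : F => ¬ canonChar 2 F t = 1)).card := by
        apply Finset.card_bij (fun t _ => t + b)
        · intro t ht
          simp only [mem_filter, mem_univ, true_and] at ht ⊢
          rw [chi_add, ht, one_mul]; exact hb
        · intro t1 h1 t2 h2 h
          have := add_right_cancel h; exact this
        · intro t ht
          simp only [mem_filter, mem_univ, true_and] at ht
          have h1 : canonChar 2 F (t + b) = 1 := by
            rcases chi_one_or_neg_one (t + b) with h1 | h1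
            · exact h1
            · exfalso
              rcases chi_one_or_neg_one t with h2 | h2
              · exact ht h2
              · rcases chi_one_or_neg_one b with h3 | h3
                · exact hb h3
                · rw [chi_add, h2, h3] at h1
                  norm_num at h1
          exact ⟨t + b, by simp only [mem_filter, mem_univ, true_and]; exact h1,
            by rw [add_assoc, CharTwo.add_self_eq_zero, add_zero]⟩
      have := Finset.card_filter_add_card_filter_not
        (s := (univ : Finset F)) (p := fun t => canonChar 2 F t = 1)
      rw [Finset.card_univ] at this
      omega
    omega

lemma fiber_card (t : F) :
    ((univ.filter (fun s : F => s ^ 2 + s = t)).card : ℂ) = 1 + canonChar 2 F t := by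
  by_cases ht : ∃ r : F, r ^ 2 + r = t
  · obtain ⟨r, hr⟩ := ht
    rw [fiber_card_of_mem hr]
    have h1 : canonChar 2 F t = 1 := by rw [← hr]; exact chi_phi r
    rw [h1]; norm_num
  · have h0 : (univ.filter (fun s : F => s ^ 2 + s = t)) = ∅ := by
      apply Finset.filter_eq_empty_iff.mpr
      intro s _
      exact fun h => ht ⟨s, h⟩
    have h2 : canonChar 2 F t = -1 := by
      rcases chi_one_or_neg_one t with h1 | h1
      · exfalso
        have : t ∈ univ.filter (fun t : F => canonChar 2 F t = 1) := by
          simp only [mem_filter, mem_univ, true_and]; exact h1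
        rw [← image_eq_ker] at this
        obtain ⟨r, _, hr⟩ := mem_image.mp this
        exact ht ⟨r, hr⟩
      · exact h1
    rw [h0, h2]
    norm_num

end Counting


section MainSums

open Finset

variable [DecidableEq F]

set_option linter.unusedSectionVars false

lemma sum_units (f : F → ℂ) : ∑ v : Fˣ, f ↑v = ∑ x ∈ univ.erase (0:F), f x := by
  apply Finset.sum_nbij' (i := fun v : Fˣ => (v : F))
    (j := fun x : F => if h : x = 0 then 1 else Units.mk0 x h)
  · intro v _
    simp [Units.ne_zero v]
  · intro x hx
    exact mem_univ _
  · intro v _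
    simp [Units.ne_zero v]
  · intro x hx
    simp only [mem_erase, mem_univ, and_true] at hx
    simp [hx]
  · intro v _
    rfl

lemma sum_chi_units : ∑ x ∈ univ.erase (0:F), canonChar 2 F x = -1 := by
  have h := sum_chi (F := F)
  rw [← Finset.add_sum_erase _ _ (mem_univ (0:F)), chi_zero] at h
  linear_combination h

lemma algebra_split (c x r : F) (hx : x ≠ 0) (hr0 : r ≠ 0) (hr1 : r + 1 ≠ 0) :
    c / (x * r) + c / (x * r + x) = c / (x * (r ^ 2 + r)) := by
  have h1 : x * r + x = x * (r + 1) := by ring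
  have h2 : r ^ 2 + r = r * (r + 1) := by ring
  rw [h1, h2]
  have h3 : x * r ≠ 0 := mul_ne_zero hx hr0
  have h4 : x * (r + 1) ≠ 0 := mul_ne_zero hx hr1
  have h5 : x * (r * (r + 1)) ≠ 0 := mul_ne_zero hx (mul_ne_zero hr0 hr1)
  field_simp
  linear_combination (c * r) * CharTwo.two_eq_zero (R := F)

lemma inner_eval (c x : F) (hc : c ≠ 0) (hx : x ≠ 0) :
    ∑ u ∈ (univ.erase (0:F)).erase x, canonChar 2 F (x + (c / u + c / (u + x)))
      = -(canonChar 2 F x) + ∑ t ∈ univ.erase (0:F), canonChar 2 F (x + t + c / (x * t)) := by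
  -- step 1: reindex u = x * r
  have step1 : ∑ u ∈ (univ.erase (0:F)).erase x, canonChar 2 F (x + (c / u + c / (u + x)))
      = ∑ r ∈ (univ.erase (0:F)).erase 1, canonChar 2 F (x + c / (x * (r ^ 2 + r))) := by
    apply Finset.sum_nbij' (i := fun u => u / x) (j := fun r => x * r)
    · intro u hu
      simp only [mem_erase, mem_univ, and_true] at hu ⊢
      refine ⟨fun h => hu.1 ((div_eq_one_iff_eq hx).mp h), div_ne_zero hu.2 hx⟩
    · intro r hr
      simp only [mem_erase, mem_univ, and_true] at hr ⊢
      exact ⟨fun h => hr.1 (mul_left_cancel₀ hx (by rw [h, mul_one])), mul_ne_zero hx hr.2⟩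
    · intro u hu
      field_simp
    · intro r hr
      field_simp
    · intro u hu
      simp only [mem_erase, mem_univ, and_true] at hu
      have hr0 : u / x ≠ 0 := div_ne_zero hu.2 hx
      have hr1 : u / x + 1 ≠ 0 := by
        intro h
        apply hu.1
        have := add_eq_zero_iff'.mp h
        rw [div_eq_one_iff_eq hx] at this
        exact this
      have hxr : x * (u / x) = u := by field_simp
      rw [← algebra_split c x (u / x) hx hr0 hr1, hxr]
  rw [step1]
  -- step 2: fiberwise over t = r^2 + r
  have maps : ∀ r ∈ (univ.erase (0:F)).erase 1, r ^ 2 + r ∈ univ.erase (0:F) := by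
    intro r hr
    simp only [mem_erase, mem_univ, and_true] at hr ⊢
    intro h
    rcases phi_zero_iff.mp h with h1 | h1
    · exact hr.2 h1
    · exact hr.1 h1
  have step2 : ∑ r ∈ (univ.erase (0:F)).erase 1, canonChar 2 F (x + c / (x * (r ^ 2 + r)))
      = ∑ t ∈ univ.erase (0:F), ∑ r ∈ ((univ.erase (0:F)).erase 1).filter
          (fun r => r ^ 2 + r = t), canonChar 2 F (x + c / (x * t)) := by
    rw [Finset.sum_fiberwise_of_maps_to' maps (fun t => canonChar 2 F (x + c / (x * t)))]
  rw [step2]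
  -- step 3: count fibers
  have step3 : ∀ t ∈ univ.erase (0:F),
      ∑ r ∈ ((univ.erase (0:F)).erase 1).filter (fun r => r ^ 2 + r = t),
        canonChar 2 F (x + c / (x * t))
      = (1 + canonChar 2 F t) * canonChar 2 F (x + c / (x * t)) := by
    intro t ht
    simp only [mem_erase, mem_univ, and_true] at ht
    rw [Finset.sum_const, nsmul_eq_mul]
    congr 1
    have heq : ((univ.erase (0:F)).erase 1).filter (fun r => r ^ 2 + r = t)
        = univ.filter (fun r : F => r ^ 2 + r = t) := by
      ext r
      simp only [mem_filter, mem_erase, mem_univ, and_true, true_and]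
      constructor
      · rintro ⟨_, h⟩; exact h
      · intro h
        refine ⟨⟨fun h1 => ht ?_, fun h0 => ht ?_⟩, h⟩
        · rw [← h, h1, one_pow]; exact CharTwo.add_self_eq_zero 1
        · rw [← h, h0]; norm_num
    rw [heq]
    exact fiber_card t
  rw [Finset.sum_congr rfl step3]
  -- step 4: expand and evaluate
  have step4 : ∀ t ∈ univ.erase (0:F),
      (1 + canonChar 2 F t) * canonChar 2 F (x + c / (x * t))
      = canonChar 2 F (x + c / (x * t)) + canonChar 2 F (x + t + c / (x * t)) := by
    intro t ht
    rw [add_mul, one_mul, ← chi_add]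
    congr 2
    ring
  rw [Finset.sum_congr rfl step4, Finset.sum_add_distrib]
  congr 1
  -- first piece is -χ x
  have h1 : ∀ t ∈ univ.erase (0:F), canonChar 2 F (x + c / (x * t))
      = canonChar 2 F x * canonChar 2 F (c / (x * t)) := fun t _ => chi_add _ _
  rw [Finset.sum_congr rfl h1, ← Finset.mul_sum]
  have h2 : ∑ t ∈ univ.erase (0:F), canonChar 2 F (c / (x * t))
      = ∑ s ∈ univ.erase (0:F), canonChar 2 F s := by
    apply Finset.sum_nbij' (i := fun t => c / (x * t)) (j := fun s => c / (x * s))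
    · intro t ht
      simp only [mem_erase, mem_univ, and_true] at ht ⊢
      exact div_ne_zero hc (mul_ne_zero hx ht)
    · intro s hs
      simp only [mem_erase, mem_univ, and_true] at hs ⊢
      exact div_ne_zero hc (mul_ne_zero hx hs)
    · intro t ht
      simp only [mem_erase, mem_univ, and_true] at ht
      field_simp
    · intro s hs
      simp only [mem_erase, mem_univ, and_true] at hs
      field_simp
    · intro t ht; rfl
  rw [h2, sum_chi_units]
  ring

lemma reindex_v (c u : F) (hu : u ≠ 0) :
    ∑ v ∈ univ.erase (0:F), canonChar 2 F ((u + c / u) + (v + c / v))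
      = ∑ x ∈ univ.erase u, canonChar 2 F (x + (c / u + c / (u + x))) := by
  apply Finset.sum_nbij' (i := fun v => v + u) (j := fun x => x + u)
  · intro v hv
    simp only [mem_erase, mem_univ, and_true] at hv ⊢
    intro h
    exact hv (by linear_combination h)
  · intro x hx
    simp only [mem_erase, mem_univ, and_true] at hx ⊢
    intro h
    exact hx (add_eq_zero_iff'.mp h)
  · intro v _
    linear_combination CharTwo.add_self_eq_zero u
  · intro x _
    linear_combination CharTwo.add_self_eq_zero u
  · intro v hv
    have h1 : u + (v + u) = v := by linear_combination CharTwo.add_self_eq_zero u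
    rw [h1]
    congr 1
    ring

lemma sum_fintype_congr {α : Type*} (i1 i2 : Fintype α) (f : α → ℂ) :
    @Finset.sum α ℂ _ (@Finset.univ α i1) f = @Finset.sum α ℂ _ (@Finset.univ α i2) f := by
  have h : i1 = i2 := Subsingleton.elim i1 i2
  subst h
  rfl

lemma kloos_one (c : F) :
    kloos 2 F 1 c = ∑ x ∈ univ.erase (0:F), canonChar 2 F (x + c / x) := by
  unfold kloos
  refine (sum_fintype_congr _ inferInstance _).trans ?_
  rw [← sum_units (fun a : F => canonChar 2 F (a + c / a))]
  exact Fintype.sum_equiv (Equiv.funUnique (Fin 1) Fˣ)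
    (fun x : Fin 1 → Fˣ => canonChar 2 F ((∑ i, ((x i : F))) + c / ∏ i, ((x i : F))))
    (fun v : Fˣ => canonChar 2 F ((v : F) + c / (v : F)))
    (fun x => by simp)

lemma kloos_two (c : F) :
    kloos 2 F 2 c = ∑ u ∈ univ.erase (0:F), ∑ v ∈ univ.erase (0:F),
      canonChar 2 F (u + v + c / (u * v)) := by
  unfold kloos
  refine (sum_fintype_congr _ inferInstance _).trans ?_
  have e1 : (∑ x : Fin 2 → Fˣ, canonChar 2 F ((∑ i, ((x i : F))) + c / ∏ i, ((x i : F))))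
      = ∑ p : Fˣ × Fˣ, canonChar 2 F ((p.1 : F) + (p.2 : F) + c / ((p.1 : F) * (p.2 : F))) :=
    Fintype.sum_equiv (piFinTwoEquiv fun _ => Fˣ) _ _ (fun x => by
      simp [Fin.sum_univ_two, Fin.prod_univ_two])
  rw [e1, Fintype.sum_prod_type]
  trans ∑ u ∈ univ.erase (0:F), ∑ v : Fˣ, canonChar 2 F (u + (v : F) + c / (u * (v : F)))
  · exact sum_units (fun a : F => ∑ v : Fˣ, canonChar 2 F (a + (v : F) + c / (a * (v : F))))
  · exact Finset.sum_congr rfl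
      (fun u _ => sum_units (fun a : F => canonChar 2 F (u + a + c / (u * a))))

lemma main_identity (c : F) (hc : c ≠ 0) :
    (∑ x ∈ univ.erase (0:F), canonChar 2 F (x + c / x)) ^ 2
      = (Fintype.card F : ℂ) + ∑ u ∈ univ.erase (0:F), ∑ v ∈ univ.erase (0:F),
          canonChar 2 F (u + v + c / (u * v)) := by
  rw [sq, Finset.sum_mul_sum]
  have e2 : ∀ u ∈ univ.erase (0:F),
      ∑ v ∈ univ.erase (0:F), canonChar 2 F (u + c / u) * canonChar 2 F (v + c / v)
      = ∑ x ∈ univ.erase u, canonChar 2 F (x + (c / u + c / (u + x))) := by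
    intro u hu
    simp only [mem_erase, mem_univ, and_true] at hu
    rw [← reindex_v c u hu]
    exact Finset.sum_congr rfl (fun v _ => (chi_add _ _).symm)
  rw [Finset.sum_congr rfl e2]
  have e3 : ∑ u ∈ univ.erase (0:F), ∑ x ∈ univ.erase u,
        canonChar 2 F (x + (c / u + c / (u + x)))
      = ∑ x ∈ univ, ∑ u ∈ (univ.erase (0:F)).erase x,
        canonChar 2 F (x + (c / u + c / (u + x))) := by
    apply Finset.sum_comm'
    intro u x
    simp only [mem_erase, mem_univ, and_true]
    exact ⟨fun h => ⟨Ne.symm h.2, h.1⟩, fun h => ⟨h.2, Ne.symm h.1⟩⟩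
  rw [e3, ← Finset.add_sum_erase univ _ (mem_univ (0:F))]
  have zero_term : ∑ u ∈ ((univ.erase (0:F)).erase (0:F)),
      canonChar 2 F ((0:F) + (c / u + c / (u + (0:F)))) = (Fintype.card F : ℂ) - 1 := by
    rw [Finset.erase_idem]
    have h : ∀ u ∈ univ.erase (0:F),
        canonChar 2 F ((0:F) + (c / u + c / (u + (0:F)))) = 1 := by
      intro u _
      rw [add_zero, zero_add, CharTwo.add_self_eq_zero (c / u), chi_zero]
    rw [Finset.sum_congr rfl h, Finset.sum_const, Finset.card_erase_of_mem (mem_univ 0),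
      Finset.card_univ, nsmul_eq_mul, mul_one,
      Nat.cast_sub Fintype.card_pos, Nat.cast_one]
  rw [zero_term]
  have e4 : ∀ x ∈ univ.erase (0:F),
      ∑ u ∈ (univ.erase (0:F)).erase x, canonChar 2 F (x + (c / u + c / (u + x)))
      = -(canonChar 2 F x) + ∑ t ∈ univ.erase (0:F), canonChar 2 F (x + t + c / (x * t)) := by
    intro x hx
    simp only [mem_erase, mem_univ, and_true] at hx
    exact inner_eval c x hc hx
  rw [Finset.sum_congr rfl e4, Finset.sum_add_distrib, Finset.sum_neg_distrib, sum_chi_units]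
  ring

end MainSums

end Stmt14Aux

/-- (Carlitz.)  Let `F = F_q` be a finite field of characteristic 2 and
`c ∈ Fˣ`.  Then `k₂(c) = k₁(c)² − q` for the Kloosterman sums over `F`. -/
theorem stmt14 (F : Type*) [Field F] [Fintype F] [CharP F 2] (c : F) (hc : c ≠ 0) :
    kloos 2 F 2 c = (kloos 2 F 1 c) ^ 2 - (Fintype.card F : ℂ) := by
  letI : DecidableEq F := Classical.decEq F
  rw [Stmt14Aux.kloos_two c, Stmt14Aux.kloos_one c]
  linear_combination (Stmt14Aux.main_identity c hc).symm
end
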